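/- Let c > 0 and 0 < R ≤ 1. Let M : (0,R] → ℝ be nonnegative and locally Lipschitz, and suppose that for almost every r ∈ (0,R] the derivative M'(r) exists and satisfies M'(r) ≥ (2/r)·((1 − c·r)·M(r) − c·r³). Then there exists a finite nonnegative real number L such that M(r)/r² tends to L as r tends to 0 from the right. -/

import Mathlib

open MeasureTheory Filter

open Set intervalIntegral in
lemma lipschitz_ftc_mono {f : ℝ → ℝ} {K : NNReal} (hf : LipschitzWith K f) {a b : ℝ}
    (hab : a ≤ b)
    (hder : ∀ᵐ x ∂(volume.restrict (Set.Ioc a b)), ∃ d, HasDerivAt f d x ∧ 0 ≤ d) :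
    f a ≤ f b := by
  set μ := volume.restrict (Set.Ioc a b) with hμ
  haveI : IsFiniteMeasure μ := ⟨by
    rw [Measure.restrict_apply_univ]; exact measure_Ioc_lt_top⟩
  have hcont : Continuous f := hf.continuous
  set u : ℕ → ℝ := fun n => ((n : ℝ) + 1)⁻¹ with hu
  have hu_pos : ∀ n, 0 < u n := fun n => by positivity
  have hun : ∀ n, u n * ((n : ℝ) + 1) = 1 := fun n => by
    rw [hu]; field_simp
  have hu0 : Tendsto u atTop (nhds 0) := by
    simpa [hu, one_div] using tendsto_one_div_add_atTop_nhds_zero_nat (𝕜 := ℝ)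
  set g : ℕ → ℝ → ℝ := fun n x => (f (x + u n) - f x) * ((n : ℝ) + 1) with hg
  -- a.e. pointwise convergence to deriv f
  have hae : ∀ᵐ x ∂μ, Tendsto (fun n => g n x) atTop (nhds (deriv f x)) ∧ 0 ≤ deriv f x := by
    filter_upwards [hder] with x hx
    obtain ⟨d, hd, hd0⟩ := hx
    have hderiv : deriv f x = d := hd.deriv
    have hslope := hasDerivAt_iff_tendsto_slope.1 hd
    have hxseq : Tendsto (fun n => x + u n) atTop (nhdsWithin x {x}ᶜ) := by
      apply tendsto_nhdsWithin_iff.2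
      constructor
      · simpa using (tendsto_const_nhds.add hu0)
      · exact Eventually.of_forall fun n => by
          simp [Set.mem_compl_iff, (hu_pos n).ne']
    have hT := hslope.comp hxseq
    have heq : ∀ n, slope f x (x + u n) = g n x := by
      intro n
      rw [slope_def_field, hg]
      have h1 : x + u n - x = u n := by ring
      rw [h1, div_eq_mul_inv, hu]
      simp
    refine ⟨?_, hderiv ▸ hd0⟩
    rw [hderiv]
    exact hT.congr heq
  -- dominated convergence
  have hmeas : ∀ n, AEStronglyMeasurable (g n) μ :=
    fun n => ((hcont.comp (continuous_id.add continuous_const)).sub hcont).mul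
      continuous_const |>.aestronglyMeasurable
  have hbound : ∀ n, ∀ᵐ x ∂μ, ‖g n x‖ ≤ (K : ℝ) := by
    intro n
    refine Eventually.of_forall fun x => ?_
    have h1 : |f (x + u n) - f x| ≤ K * u n := by
      have := hf.dist_le_mul (x + u n) x
      simpa [Real.dist_eq, abs_of_pos (hu_pos n)] using this
    have h2 : ‖g n x‖ ≤ (K * u n) * ((n:ℝ)+1) := by
      rw [hg, Real.norm_eq_abs, abs_mul,
        abs_of_pos (show (0:ℝ) < (n:ℝ)+1 by positivity)]
      exact mul_le_mul_of_nonneg_right h1 (by positivity)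
    calc ‖g n x‖ ≤ (K * u n) * ((n:ℝ)+1) := h2
      _ = K * (u n * ((n:ℝ)+1)) := by ring
      _ = K := by rw [hun n, mul_one]
  have hDCT := tendsto_integral_of_dominated_convergence (fun _ => (K:ℝ)) hmeas
    (integrable_const _) hbound ((hae.mono fun x hx => hx.1))
  have hint_nonneg : 0 ≤ ∫ x, deriv f x ∂μ :=
    integral_nonneg_of_ae (hae.mono fun x hx => hx.2)
  -- compute the integrals of g n
  have hfi : ∀ p q : ℝ, IntervalIntegrable f volume p q := fun p q =>
    hcont.intervalIntegrable p q
  have hcomp : ∀ n, ∫ x, g n x ∂μ =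
      ((∫ x in b..(b + u n), f x) - ∫ x in a..(a + u n), f x) * ((n:ℝ)+1) := by
    intro n
    have h1 : ∫ x, g n x ∂μ = ∫ x in a..b, g n x := by
      rw [hμ, intervalIntegral.integral_of_le hab]
    rw [h1, hg]
    have h2 : ∫ x in a..b, (f (x + u n) - f x) * ((n:ℝ)+1)
        = ((∫ x in a..b, f (x + u n)) - ∫ x in a..b, f x) * ((n:ℝ)+1) := by
      rw [intervalIntegral.integral_mul_const, intervalIntegral.integral_sub]
      · exact (hcont.comp (continuous_id.add continuous_const)).intervalIntegrable a b
      · exact hfi a b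
    rw [h2, intervalIntegral.integral_comp_add_right f (u n)]
    have h3 : (∫ x in a..b, f x) + ∫ x in b..(b + u n), f x = ∫ x in a..(b + u n), f x :=
      integral_add_adjacent_intervals (hfi a b) (hfi b (b + u n))
    have h4 : (∫ x in a..(a + u n), f x) + ∫ x in (a + u n)..(b + u n), f x
        = ∫ x in a..(b + u n), f x :=
      integral_add_adjacent_intervals (hfi a (a + u n)) (hfi (a + u n) (b + u n))
    have h5 : (∫ x in (a + u n)..(b + u n), f x)
        = (∫ x in a..(b + u n), f x) - ∫ x in a..(a + u n), f x := eq_sub_of_add_eq' h4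
    rw [h5, ← h3]; ring
  -- endpoint limits
  have hend : ∀ (p : ℝ) (n : ℕ),
      |(∫ x in p..(p + u n), f x) * ((n:ℝ)+1) - f p| ≤ K * u n := by
    intro p n
    have h1 : (∫ x in p..(p + u n), f x) - (u n) * f p = ∫ x in p..(p + u n), (f x - f p) := by
      rw [intervalIntegral.integral_sub (hfi _ _) (intervalIntegrable_const)]
      simp [intervalIntegral.integral_const]
    have h2 : ‖∫ x in p..(p + u n), (f x - f p)‖ ≤ (K * u n) * |p + u n - p| := by
      apply intervalIntegral.norm_integral_le_of_norm_le_const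
      intro x hx
      rw [Set.uIoc_of_le (by linarith [hu_pos n])] at hx
      have hK := hf.dist_le_mul x p
      rw [Real.dist_eq, Real.dist_eq] at hK
      have hxp : |x - p| ≤ u n := by
        rw [abs_of_nonneg (by linarith [hx.1])]
        linarith [hx.2]
      calc ‖f x - f p‖ ≤ K * |x - p| := hK
        _ ≤ K * u n := mul_le_mul_of_nonneg_left hxp (by positivity)
    have h3 : |p + u n - p| = u n := by
      rw [show p + u n - p = u n by ring]
      exact abs_of_pos (hu_pos n)
    have h4 : |(∫ x in p..(p + u n), f x) - (u n) * f p| ≤ K * u n * u n := by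
      rw [h1]; rw [h3] at h2; exact h2
    have h5 : (∫ x in p..(p + u n), f x) * ((n:ℝ)+1) - f p
        = ((∫ x in p..(p + u n), f x) - (u n) * f p) * ((n:ℝ)+1) := by
      linear_combination (f p) * (hun n)
    rw [h5, abs_mul, abs_of_pos (show (0:ℝ) < (n:ℝ)+1 by positivity)]
    calc |(∫ x in p..(p + u n), f x) - u n * f p| * ((n:ℝ)+1)
        ≤ (K * u n * u n) * ((n:ℝ)+1) := mul_le_mul_of_nonneg_right h4 (by positivity)
      _ = (K * u n) * (u n * ((n:ℝ)+1)) := by ring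
      _ = K * u n := by rw [hun n, mul_one]
  -- limit of integrals is f b - f a
  have hlim2 : Tendsto (fun n => ∫ x, g n x ∂μ) atTop (nhds (f b - f a)) := by
    rw [← tendsto_sub_nhds_zero_iff]
    refine squeeze_zero_norm (a := fun n => 2 * K * u n) (fun n => ?_) ?_
    · rw [hcomp n]
      have e1 := hend b n
      have e2 := hend a n
      have e3 : (((∫ x in b..(b + u n), f x) - ∫ x in a..(a + u n), f x) * ((n:ℝ)+1))
          - (f b - f a)
          = ((∫ x in b..(b + u n), f x) * ((n:ℝ)+1) - f b)
            - ((∫ x in a..(a + u n), f x) * ((n:ℝ)+1) - f a) := by ring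
      rw [Real.norm_eq_abs, e3]
      have := abs_sub ((∫ x in b..(b + u n), f x) * ((n:ℝ)+1) - f b)
        ((∫ x in a..(a + u n), f x) * ((n:ℝ)+1) - f a)
      calc |_| ≤ _ + _ := this
        _ ≤ K * u n + K * u n := add_le_add e1 e2
        _ = 2 * K * u n := by ring
    · simpa using (tendsto_const_nhds.mul hu0 :
        Tendsto (fun n => (2 * (K:ℝ)) * u n) atTop (nhds (2 * K * 0)))
  have hkey := tendsto_nhds_unique hDCT hlim2
  linarith

open Set in
lemma exists_lip_Icc {f : ℝ → ℝ} {a b : ℝ} (hab : a ≤ b)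
    (H : ∀ x ∈ Set.Icc a b, ∃ ε > 0, ∃ K : NNReal,
      LipschitzOnWith K f (Set.Icc a b ∩ Metric.ball x ε)) :
    ∃ K : NNReal, LipschitzOnWith K f (Set.Icc a b) := by
  classical
  choose! ε hε K hK using H
  have cover : Set.Icc a b ⊆ ⋃ x ∈ Set.Icc a b, Metric.ball x (ε x / 2) := fun x hx =>
    Set.mem_biUnion hx (Metric.mem_ball_self (half_pos (hε x hx)))
  obtain ⟨t, hts, htfin, htcover⟩ :=
    isCompact_Icc.elim_finite_subcover_image (fun x _ => Metric.isOpen_ball) cover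
  set T : Finset ℝ := htfin.toFinset with hT
  have hTs : ∀ x ∈ T, x ∈ Set.Icc a b := fun x hx => hts (htfin.mem_toFinset.1 hx)
  have hTcover : ∀ y ∈ Set.Icc a b, ∃ x ∈ T, y ∈ Metric.ball x (ε x / 2) := by
    intro y hy
    obtain ⟨x, hx, hyx⟩ := Set.mem_iUnion₂.1 (htcover hy)
    exact ⟨x, htfin.mem_toFinset.2 hx, hyx⟩
  have hTne : T.Nonempty := by
    obtain ⟨x, hx, _⟩ := hTcover a ⟨le_refl a, hab⟩
    exact ⟨x, hx⟩
  set δ : ℝ := T.inf' hTne (fun x => ε x / 2) with hδ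
  have hδ_pos : 0 < δ := by
    rw [hδ]
    exact (Finset.lt_inf'_iff hTne).2 fun x hx => half_pos (hε x (hTs x hx))
  set Km : NNReal := T.sup (fun x => K x) with hKm
  -- local step
  have step : ∀ y ∈ Set.Icc a b, ∀ z ∈ Set.Icc a b, dist y z ≤ δ →
      dist (f y) (f z) ≤ Km * dist y z := by
    intro y hy z hz hyz
    obtain ⟨x, hxT, hyx⟩ := hTcover y hy
    have hδx : δ ≤ ε x / 2 := Finset.inf'_le _ hxT
    have hy' : y ∈ Set.Icc a b ∩ Metric.ball x (ε x) := by
      refine ⟨hy, ?_⟩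
      rw [Metric.mem_ball] at hyx ⊢
      linarith [hε x (hTs x hxT)]
    have hz' : z ∈ Set.Icc a b ∩ Metric.ball x (ε x) := by
      refine ⟨hz, ?_⟩
      rw [Metric.mem_ball] at hyx ⊢
      calc dist z x ≤ dist z y + dist y x := dist_triangle z y x
        _ < δ + ε x / 2 := by rw [dist_comm z y]; exact add_lt_add_of_le_of_lt hyz hyx
        _ ≤ ε x := by linarith
    have hKx : LipschitzOnWith (K x) f (Set.Icc a b ∩ Metric.ball x (ε x)) :=
      (hK x (hTs x hxT)).mono (Set.inter_subset_inter_right _ (Metric.ball_subset_ball le_rfl))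
    have := hKx.dist_le_mul y hy' z hz'
    calc dist (f y) (f z) ≤ (K x : ℝ) * dist y z := this
      _ ≤ Km * dist y z := by
        apply mul_le_mul_of_nonneg_right _ dist_nonneg
        exact_mod_cast Finset.le_sup hxT
  refine ⟨Km, LipschitzOnWith.of_dist_le_mul fun y hy z hz => ?_⟩
  -- chaining
  rcases eq_or_ne y z with rfl | hne
  · simp
  set n : ℕ := max 1 ⌈dist y z / δ⌉₊ with hn
  have hn_pos : 0 < n := lt_of_lt_of_le one_pos (le_max_left _ _)
  have hn_ge : dist y z / δ ≤ n := le_trans (Nat.le_ceil _) (by exact_mod_cast le_max_right 1 _)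
  have hstep_le : dist y z / n ≤ δ := by
    rw [div_le_iff₀ (by exact_mod_cast hn_pos)]
    rw [div_le_iff₀ hδ_pos] at hn_ge
    linarith [hn_ge]
  set p : ℕ → ℝ := fun i => y + ((i : ℝ) / n) * (z - y) with hp
  have hp_mem : ∀ i ≤ n, p i ∈ Set.Icc a b := by
    intro i hi
    have h0 : (0:ℝ) ≤ (i:ℝ)/n := by positivity
    have h1 : (i:ℝ)/n ≤ 1 := by
      rw [div_le_one (by exact_mod_cast hn_pos)]
      exact_mod_cast hi
    have := (convex_Icc a b) hy hz (by linarith : (0:ℝ) ≤ 1 - (i:ℝ)/n) h0 (by ring)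
    convert this using 1
    rw [hp]; simp [smul_eq_mul]; ring
  have hp_dist : ∀ i, dist (p i) (p (i+1)) = dist y z / n := by
    intro i
    have hne' : (n:ℝ) ≠ 0 := by exact_mod_cast hn_pos.ne'
    simp only [hp, Real.dist_eq]
    push_cast
    rw [show y + (i:ℝ)/(n:ℝ)*(z-y) - (y + ((i:ℝ)+1)/(n:ℝ)*(z-y)) = -((z-y)/(n:ℝ)) by
      field_simp; ring]
    rw [abs_neg, abs_div, abs_of_pos (by exact_mod_cast hn_pos : (0:ℝ) < (n:ℝ)),
      abs_sub_comm z y]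
  have hp0 : p 0 = y := by rw [hp]; simp
  have hpn : p n = z := by
    rw [hp]
    have hne' : (n:ℝ) ≠ 0 := by exact_mod_cast hn_pos.ne'
    field_simp
    ring
  calc dist (f y) (f z) = dist (f (p 0)) (f (p n)) := by rw [hp0, hpn]
    _ ≤ ∑ i ∈ Finset.range n, dist (f (p i)) (f (p (i+1))) := dist_le_range_sum_dist (f ∘ p) n
    _ ≤ ∑ i ∈ Finset.range n, Km * (dist y z / n) := by
        apply Finset.sum_le_sum
        intro i hi
        have hi' : i < n := Finset.mem_range.1 hi
        have h1 := step (p i) (hp_mem i hi'.le) (p (i+1)) (hp_mem (i+1) hi')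
          (by rw [hp_dist i]; exact hstep_le)
        rw [hp_dist i] at h1
        exact h1
    _ = Km * dist y z := by
        rw [Finset.sum_const, Finset.card_range, nsmul_eq_mul]
        field_simp

open Set in
lemma density_mono (c R : ℝ) (hc : 0 < c) (hR0 : 0 < R) (hR1 : R ≤ 1)
    (M : ℝ → ℝ) (hMnonneg : ∀ x ∈ Set.Ioc (0 : ℝ) R, 0 ≤ M x)
    (hMlip : LocallyLipschitzOn (Set.Ioc (0 : ℝ) R) M)
    (hder : ∀ᵐ r ∂(volume.restrict (Set.Ioc (0 : ℝ) R)),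
      ∃ d : ℝ, HasDerivAt M d r ∧ d ≥ (2 / r) * ((1 - c * r) * M r - c * r ^ 3))
    {x y : ℝ} (hx : x ∈ Set.Ioo (0:ℝ) R) (hy : y ∈ Set.Ioo (0:ℝ) R) (hxy : x ≤ y) :
    Real.exp (2*c*x) * (M x / x^2 + 1) ≤ Real.exp (2*c*y) * (M y / y^2 + 1) := by
  set F : ℝ → ℝ := fun r => Real.exp (2*c*r) * (M r / r^2 + 1) with hF
  have hxpos : 0 < x := hx.1
  have hIcc_sub : Set.Icc x y ⊆ Set.Ioc (0:ℝ) R := fun p hp =>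
    ⟨lt_of_lt_of_le hxpos hp.1, le_trans hp.2 hy.2.le⟩
  -- M is Lipschitz on Icc x y
  obtain ⟨K₀, hlipM⟩ : ∃ K : NNReal, LipschitzOnWith K M (Set.Icc x y) := by
    apply exists_lip_Icc hxy
    intro p hp
    obtain ⟨K, t, ht, hlip⟩ := hMlip (hIcc_sub hp)
    obtain ⟨ε, hε, hball⟩ := Metric.mem_nhdsWithin_iff.1 ht
    exact ⟨ε, hε, K, hlip.mono fun q hq => hball ⟨hq.2, hIcc_sub hq.1⟩⟩
  -- bound on M
  obtain ⟨B, hB⟩ := isCompact_Icc.exists_bound_of_continuousOn hlipM.continuousOn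
  -- auxiliary functions A (= exp(2cr)/r²) and E (= exp(2cr))
  set A : ℝ → ℝ := fun p => Real.exp (2*c*p) * (p^2)⁻¹ with hA
  have ce : Continuous fun p : ℝ => Real.exp (2*c*p) := by continuity
  have hExpDer : ∀ p : ℝ, HasDerivAt (fun r => Real.exp (2*c*r)) (Real.exp (2*c*p) * (2*c)) p := by
    intro p
    simpa using ((hasDerivAt_id p).const_mul (2*c)).exp
  have hsq : ∀ p : ℝ, HasDerivAt (fun r : ℝ => r^2) (2*p) p := by
    intro p; simpa using hasDerivAt_pow 2 p
  set A' : ℝ → ℝ := fun p => Real.exp (2*c*p) * (2*c) * (p^2)⁻¹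
      + Real.exp (2*c*p) * (-(2*p) / ((p^2)^2)) with hA'
  have hADer : ∀ p : ℝ, p ≠ 0 → HasDerivAt A (A' p) p := by
    intro p hp
    have h1 : HasDerivAt (fun r : ℝ => (r^2)⁻¹) (-(2*p) / ((p^2)^2)) p :=
      (hsq p).inv (pow_ne_zero 2 hp)
    exact (hExpDer p).mul h1
  have hA'cont : ContinuousOn A' (Set.Icc x y) := by
    have hne1 : ∀ p ∈ Set.Icc x y, (p^2 : ℝ) ≠ 0 := fun p hp => by
      have := lt_of_lt_of_le hxpos hp.1; positivity
    have hne2 : ∀ p ∈ Set.Icc x y, ((p^2 : ℝ)^2) ≠ 0 := fun p hp => by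
      have := lt_of_lt_of_le hxpos hp.1; positivity
    exact ((ce.continuousOn.mul continuousOn_const).mul
        (((continuous_pow 2).continuousOn).inv₀ hne1)).add
      (ce.continuousOn.mul ((((continuous_const.mul continuous_id).neg).continuousOn).div
        ((continuous_pow 2).pow 2).continuousOn hne2))
  obtain ⟨CA, hCA⟩ := isCompact_Icc.exists_bound_of_continuousOn hA'cont
  have hAlip : ∀ p ∈ Set.Icc x y, ∀ q ∈ Set.Icc x y, ‖A q - A p‖ ≤ CA * ‖q - p‖ := by
    intro p hp q hq
    exact (convex_Icc x y).norm_image_sub_le_of_norm_hasDerivWithin_le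
      (fun r hr => (hADer r (lt_of_lt_of_le hxpos hr.1).ne').hasDerivWithinAt)
      hCA hp hq
  obtain ⟨BA, hBA⟩ := isCompact_Icc.exists_bound_of_continuousOn
    ((ce.continuousOn.mul (((continuous_pow 2).continuousOn).inv₀
      (fun p hp => by have := lt_of_lt_of_le hxpos hp.1; positivity)) : ContinuousOn A _))
  -- E part
  obtain ⟨CE, hCE⟩ := isCompact_Icc.exists_bound_of_continuousOn
    ((ce.mul continuous_const).continuousOn :
      ContinuousOn (fun p => Real.exp (2*c*p) * (2*c)) (Set.Icc x y))
  have hElip : ∀ p ∈ Set.Icc x y, ∀ q ∈ Set.Icc x y,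
      ‖Real.exp (2*c*q) - Real.exp (2*c*p)‖ ≤ CE * ‖q - p‖ := by
    intro p hp q hq
    exact (convex_Icc x y).norm_image_sub_le_of_norm_hasDerivWithin_le
      (fun r _ => (hExpDer r).hasDerivWithinAt) hCE hp hq
  -- F is Lipschitz on Icc x y
  have hFeq : ∀ p ∈ Set.Icc x y, F p = A p * M p + Real.exp (2*c*p) := by
    intro p hp
    have hp0 : p ≠ 0 := (lt_of_lt_of_le hxpos hp.1).ne'
    simp only [hF, hA]
    field_simp
  set Ch : ℝ := BA * K₀ + B * CA + CE with hCh
  have hFdist : ∀ p ∈ Set.Icc x y, ∀ q ∈ Set.Icc x y,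
      dist (F p) (F q) ≤ Ch * dist p q := by
    intro p hp q hq
    rw [Real.dist_eq, Real.dist_eq, hFeq p hp, hFeq q hq]
    have e1 : A p * M p + Real.exp (2*c*p) - (A q * M q + Real.exp (2*c*q))
        = A p * (M p - M q) + M q * (A p - A q)
          + (Real.exp (2*c*p) - Real.exp (2*c*q)) := by ring
    rw [e1]
    have hMd : |M p - M q| ≤ K₀ * |p - q| := by
      have := hlipM.dist_le_mul p hp q hq
      simpa [Real.dist_eq] using this
    have t1 : |A p * (M p - M q)| ≤ BA * (K₀ * |p - q|) := by
      rw [abs_mul]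
      apply mul_le_mul (hBA p hp) hMd (abs_nonneg _)
        (le_trans (abs_nonneg _) (hBA p hp))
    have t2 : |M q * (A p - A q)| ≤ B * (CA * |p - q|) := by
      rw [abs_mul]
      have h2 : |A p - A q| ≤ CA * |p - q| := by
        have := hAlip q hq p hp
        simpa [Real.norm_eq_abs] using this
      apply mul_le_mul (hB q hq) h2 (abs_nonneg _) (le_trans (abs_nonneg _) (hB q hq))
    have t3 : |Real.exp (2*c*p) - Real.exp (2*c*q)| ≤ CE * |p - q| := by
      have := hElip q hq p hp
      simpa [Real.norm_eq_abs] using this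
    calc |A p * (M p - M q) + M q * (A p - A q)
          + (Real.exp (2*c*p) - Real.exp (2*c*q))|
        ≤ |A p * (M p - M q)| + |M q * (A p - A q)|
          + |Real.exp (2*c*p) - Real.exp (2*c*q)| := abs_add_three _ _ _
      _ ≤ BA * (K₀ * |p - q|) + B * (CA * |p - q|) + CE * |p - q| :=
          add_le_add (add_le_add t1 t2) t3
      _ = Ch * |p - q| := by rw [hCh]; ring
  have hFlip : LipschitzOnWith Ch.toNNReal F (Set.Icc x y) := by
    apply LipschitzOnWith.of_dist_le_mul
    intro p hp q hq
    calc dist (F p) (F q) ≤ Ch * dist p q := hFdist p hp q hq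
      _ ≤ Ch.toNNReal * dist p q := by
          apply mul_le_mul_of_nonneg_right _ dist_nonneg
          rw [Real.coe_toNNReal']
          exact le_max_left _ _
  -- extend F to a global Lipschitz function
  obtain ⟨G, hGlip, hGeq⟩ := hFlip.extend_real
  -- a.e. derivative condition for G on Ioc x y
  have hsub2 : Set.Ioc x y ⊆ Set.Ioc (0:ℝ) R := fun p hp =>
    ⟨lt_trans hxpos hp.1, le_trans hp.2 hy.2.le⟩
  have hae1 := ae_restrict_of_ae_restrict_of_subset hsub2 hder
  have hae2 : ∀ᵐ p ∂(volume.restrict (Set.Ioc x y)), p ∈ Set.Ioc x y :=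
    ae_restrict_mem measurableSet_Ioc
  have hae3 : ∀ᵐ p ∂(volume.restrict (Set.Ioc x y)), p ≠ y := by
    refine Filter.Eventually.filter_mono (ae_mono Measure.restrict_le_self) ?_
    rw [ae_iff]
    have : {p : ℝ | ¬ p ≠ y} = {y} := by ext p; simp
    rw [this]
    exact measure_singleton y
  have haeG : ∀ᵐ p ∂(volume.restrict (Set.Ioc x y)), ∃ d, HasDerivAt G d p ∧ 0 ≤ d := by
    filter_upwards [hae1, hae2, hae3] with p hp1 hp2 hp3
    obtain ⟨m, hm, hmge⟩ := hp1
    have hpo : p ∈ Set.Ioo x y := ⟨hp2.1, lt_of_le_of_ne hp2.2 hp3⟩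
    have hppos : 0 < p := lt_trans hxpos hpo.1
    have hp0 : p ≠ 0 := hppos.ne'
    have hMp : 0 ≤ M p := hMnonneg p (hsub2 hp2)
    -- derivative of F at p
    set d : ℝ := Real.exp (2*c*p) * (2*c) * (M p / p^2 + 1)
        + Real.exp (2*c*p) * ((m * p^2 - M p * (2*p)) / (p^2)^2) with hd
    have hFder : HasDerivAt F d p := by
      have hdiv : HasDerivAt (fun r => M r / r^2)
          ((m * p^2 - M p * (2*p)) / (p^2)^2) p :=
        hm.div (hsq p) (pow_ne_zero 2 hp0)
      exact (hExpDer p).mul (hdiv.add_const 1)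
    -- nonnegativity of d
    have hmp : 2*((1-c*p)*M p - c*p^3) ≤ m*p := by
      have h1 := mul_le_mul_of_nonneg_right hmge hppos.le
      have h2 : (2/p) * ((1-c*p)*M p - c*p^3) * p = 2*((1-c*p)*M p - c*p^3) := by
        field_simp
      calc 2*((1-c*p)*M p - c*p^3) = (2/p) * ((1-c*p)*M p - c*p^3) * p := h2.symm
        _ ≤ m * p := h1
    have hnum : 0 ≤ 2*c*(M p*p + p^3) + m*p - 2*M p := by nlinarith [hmp]
    have hd_eq : d = Real.exp (2*c*p)
        * ((2*c*(M p*p + p^3) + m*p - 2*M p) / p^3) := by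
      rw [hd]
      field_simp
      ring
    have hd0 : 0 ≤ d := by
      rw [hd_eq]
      exact mul_nonneg (Real.exp_pos _).le (div_nonneg hnum (by positivity))
    -- transfer to G
    have hnhds : Set.Icc x y ∈ nhds p := Icc_mem_nhds hpo.1 hpo.2
    have hGF : G =ᶠ[nhds p] F :=
      Filter.eventually_of_mem hnhds fun q hq => (hGeq hq).symm
    exact ⟨d, hFder.congr_of_eventuallyEq hGF, hd0⟩
  have := lipschitz_ftc_mono hGlip hxy haeG
  have hxI : x ∈ Set.Icc x y := ⟨le_refl x, hxy⟩
  have hyI : y ∈ Set.Icc x y := ⟨hxy, le_refl y⟩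
  calc F x = G x := hGeq hxI
    _ ≤ G y := this
    _ = F y := (hGeq hyI).symm

open Set in
/-- Conclusion of the density lemma: under the differential inequality
`M'(r) ≥ (2/r) ((1 - c r) M r - c r³)` a.e., the density ratio `M(r)/r²`
has a finite nonnegative limit as `r → 0⁺`. -/
theorem stmt_2 (c R : ℝ) (hc : 0 < c) (hR0 : 0 < R) (hR1 : R ≤ 1)
    (M : ℝ → ℝ) (hMnonneg : ∀ x ∈ Set.Ioc (0 : ℝ) R, 0 ≤ M x)
    (hMlip : LocallyLipschitzOn (Set.Ioc (0 : ℝ) R) M)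
    (hder : ∀ᵐ r ∂(volume.restrict (Set.Ioc (0 : ℝ) R)),
      ∃ d : ℝ, HasDerivAt M d r ∧ d ≥ (2 / r) * ((1 - c * r) * M r - c * r ^ 3)) :
    ∃ L : ℝ, 0 ≤ L ∧
      Tendsto (fun r => M r / r ^ 2) (nhdsWithin 0 (Set.Ioi (0 : ℝ))) (nhds L) := by
  set F : ℝ → ℝ := fun r => Real.exp (2*c*r) * (M r / r^2 + 1) with hF
  have hmono : MonotoneOn F (Set.Ioo (0:ℝ) R) := fun p hp q hq hpq =>
    density_mono c R hc hR0 hR1 M hMnonneg hMlip hder hp hq hpq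
  have h_nonempty : (Set.Ioo (0:ℝ) R).Nonempty := ⟨R/2, by constructor <;> linarith⟩
  have h_bdd : BddBelow (F '' Set.Ioo (0:ℝ) R) := by
    refine ⟨0, ?_⟩
    rintro _ ⟨r, hr, rfl⟩
    have hM0 : 0 ≤ M r := hMnonneg r ⟨hr.1, hr.2.le⟩
    exact mul_nonneg (Real.exp_pos _).le
      (add_nonneg (div_nonneg hM0 (by positivity)) zero_le_one)
  have hT1 : Tendsto F (nhdsWithin 0 (Set.Ioi (0:ℝ))) (nhds (sInf (F '' Set.Ioo (0:ℝ) R))) :=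
    MonotoneOn.tendsto_nhdsWithin_Ioo_right h_nonempty hmono h_bdd
  have hT2 : Tendsto (fun r : ℝ => (Real.exp (2*c*r))⁻¹)
      (nhdsWithin 0 (Set.Ioi (0:ℝ))) (nhds 1) := by
    have hcont : Continuous fun r : ℝ => (Real.exp (2*c*r))⁻¹ :=
      (Real.continuous_exp.comp (continuous_const.mul continuous_id)).inv₀
        fun r => Real.exp_ne_zero _
    have := hcont.tendsto 0
    simp only [mul_zero, Real.exp_zero, inv_one] at this
    exact this.mono_left nhdsWithin_le_nhds
  have hid : ∀ r : ℝ, F r * (Real.exp (2*c*r))⁻¹ - 1 = M r / r^2 := by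
    intro r
    have he := Real.exp_ne_zero (2*c*r)
    simp only [hF]
    rw [mul_comm (Real.exp (2*c*r)), mul_assoc, mul_inv_cancel₀ he, mul_one]
    ring
  refine ⟨sInf (F '' Set.Ioo (0:ℝ) R) - 1, ?_, ?_⟩
  · -- nonnegativity of the limit
    have hT : Tendsto (fun r => M r / r^2) (nhdsWithin 0 (Set.Ioi (0:ℝ)))
        (nhds (sInf (F '' Set.Ioo (0:ℝ) R) - 1)) := by
      have := (hT1.mul hT2).sub_const 1
      rw [mul_one] at this
      exact this.congr hid
    refine ge_of_tendsto hT ?_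
    filter_upwards [Ioc_mem_nhdsGT_of_mem (⟨le_refl (0:ℝ), hR0⟩ : (0:ℝ) ∈ Set.Ico 0 R)]
      with r hr
    exact div_nonneg (hMnonneg r hr) (by positivity)
  · have := (hT1.mul hT2).sub_const 1
    rw [mul_one] at this
    exact this.congr hid
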